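/- Let F : [0,T]² → ℝ vanish on the axes (F(a,0)=F(0,b)=0 for all a,b) and have bounded planar variation, i.e. sup over subdivisions τ = {0=t₀<…<tₙ=T} of ∑_{i,j} |Δ_{]tᵢ,tᵢ₊₁]×]tⱼ,tⱼ₊₁]} F| is finite, where Δ_I F = F(b₁,b₂)+F(a₁,a₂)−F(a₁,b₂)−F(b₁,a₂) for I = ]a₁,b₁]×]a₂,b₂]. Then F = F⁺ − F⁻ where F⁺ and F⁻ are planarly increasing (Δ_I F⁺ ≥ 0 and Δ_I F⁻ ≥ 0 for all rectangles I ⊆ [0,T]²) and vanish on the axes. -/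

import Mathlib

open Set

noncomputable section

/-- Planar increment of `F` over the rectangle `]a₁,b₁] × ]a₂,b₂]`. -/
def planarInc (F : ℝ × ℝ → ℝ) (a₁ b₁ a₂ b₂ : ℝ) : ℝ :=
  F (b₁, b₂) + F (a₁, a₂) - F (a₁, b₂) - F (b₁, a₂)

/-- `F` vanishes on the axes. -/
def VanishesOnAxes (F : ℝ × ℝ → ℝ) : Prop :=
  ∀ a : ℝ, 0 ≤ a → F (a, 0) = 0 ∧ F (0, a) = 0

/-- `F` is planarly increasing on `[0,T]²`. -/
def PlanarlyIncreasingOn (F : ℝ × ℝ → ℝ) (T : ℝ) : Prop :=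
  ∀ a₁ b₁ a₂ b₂ : ℝ, 0 ≤ a₁ → a₁ ≤ b₁ → b₁ ≤ T → 0 ≤ a₂ → a₂ ≤ b₂ → b₂ ≤ T →
    0 ≤ planarInc F a₁ b₁ a₂ b₂

/-- `F` has bounded planar variation on `[0,T]²`. -/
def BoundedPlanarVariation (F : ℝ × ℝ → ℝ) (T : ℝ) : Prop :=
  ∃ M : ℝ, ∀ (n : ℕ) (t : Fin (n + 1) → ℝ), Monotone t → t 0 = 0 → t (Fin.last n) = T →
    ∑ i : Fin n, ∑ j : Fin n,
      |planarInc F (t i.castSucc) (t i.succ) (t j.castSucc) (t j.succ)| ≤ M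

namespace PVx

def pairs (l : List ℝ) : List (ℝ × ℝ) := l.zip l.tail

def S1 (g : ℝ → ℝ → ℝ) (l : List ℝ) : ℝ := (pairs l |>.map fun p => g p.1 p.2).sum

def Part (a b : ℝ) (l : List ℝ) : Prop :=
  l.Pairwise (· ≤ ·) ∧ l.head? = some a ∧ l.getLast? = some b

def Adm (g : ℝ → ℝ → ℝ) : Prop :=
  (∀ x y, 0 ≤ g x y) ∧ (∀ x, g x x = 0) ∧ (∀ x y z, g x z ≤ g x y + g y z)

lemma S1_nil (g : ℝ → ℝ → ℝ) : S1 g [] = 0 := rfl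
lemma S1_single (g : ℝ → ℝ → ℝ) (a : ℝ) : S1 g [a] = 0 := rfl
lemma S1_cons₂ (g : ℝ → ℝ → ℝ) (a b : ℝ) (l : List ℝ) :
    S1 g (a :: b :: l) = g a b + S1 g (b :: l) := rfl

lemma S1_nonneg {g : ℝ → ℝ → ℝ} (hg : ∀ x y, 0 ≤ g x y) (l : List ℝ) : 0 ≤ S1 g l := by
  apply List.sum_nonneg; simp only [List.mem_map]
  rintro _ ⟨p, -, rfl⟩; exact hg _ _

lemma S1_mono_fun {g₁ g₂ : ℝ → ℝ → ℝ} (h : ∀ x y, g₁ x y ≤ g₂ x y) (l : List ℝ) :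
    S1 g₁ l ≤ S1 g₂ l :=
  List.sum_le_sum (fun p _ => h p.1 p.2)

lemma S1_zero {g : ℝ → ℝ → ℝ} (h : ∀ x y, g x y = 0) (l : List ℝ) : S1 g l = 0 := by
  have h1 : S1 g l ≤ S1 (fun _ _ => (0:ℝ)) l := S1_mono_fun (fun x y => le_of_eq (h x y)) l
  have h2 : S1 (fun _ _ => (0:ℝ)) l ≤ S1 g l := S1_mono_fun (fun x y => ge_of_eq (h x y)) l
  have h3 : S1 (fun _ _ => (0:ℝ)) l = 0 := by
    simp [S1, List.sum_map_zero]
  linarith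

lemma S1_add_fun (g₁ g₂ : ℝ → ℝ → ℝ) (l : List ℝ) :
    S1 (fun x y => g₁ x y + g₂ x y) l = S1 g₁ l + S1 g₂ l := by
  induction l with
  | nil => simp [S1_nil]
  | cons a l ih =>
    cases l with
    | nil => simp [S1_single]
    | cons b l' =>
      rw [S1_cons₂, S1_cons₂, S1_cons₂, ih]; ring

lemma Part.ne_nil {a b : ℝ} {l : List ℝ} (h : Part a b l) : l ≠ [] := by
  rintro rfl; simpa using h.2.1

lemma Part.head_mem {a b : ℝ} {l : List ℝ} (h : Part a b l) : a ∈ l :=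
  List.mem_of_mem_head? (by rw [h.2.1]; rfl)

lemma Part.last_mem {a b : ℝ} {l : List ℝ} (h : Part a b l) : b ∈ l :=
  List.mem_of_mem_getLast? (by rw [h.2.2]; rfl)

lemma sorted_le_getLast : ∀ {l : List ℝ}, l.Pairwise (· ≤ ·) → ∀ {x : ℝ}, x ∈ l →
    ∀ {b : ℝ}, l.getLast? = some b → x ≤ b
  | [], _, _, hx, _, _ => by simp at hx
  | [c], _, x, hx, b, hb => by
      simp at hx hb; simp [hx, hb]
  | c :: d :: l', hs, x, hx, b, hb => by
      have hb' : (d :: l').getLast? = some b := by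
        rwa [List.getLast?_cons_cons] at hb
      rcases List.mem_cons.1 hx with rfl | h
      · have hcd : x ≤ d := (List.pairwise_cons.1 hs).1 d (by simp)
        have := sorted_le_getLast (List.pairwise_cons.1 hs).2 (List.mem_cons_self (a := d) (l := l')) hb'
        linarith
      · exact sorted_le_getLast (List.pairwise_cons.1 hs).2 h hb'

lemma Part.bounds {a b : ℝ} {l : List ℝ} (h : Part a b l) {x : ℝ} (hx : x ∈ l) :
    a ≤ x ∧ x ≤ b := by
  obtain ⟨hs, hh, hl⟩ := h
  constructor
  · cases l with
    | nil => simp at hx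
    | cons c l' =>
      have : c = a := by simpa using hh
      subst this
      rcases List.mem_cons.1 hx with rfl | h
      · exact le_refl _
      · exact (List.pairwise_cons.1 hs).1 x h
  · exact sorted_le_getLast hs hx hl

lemma Part.le {a b : ℝ} {l : List ℝ} (h : Part a b l) : a ≤ b :=
  (h.bounds h.head_mem).2

lemma part_single (a : ℝ) : Part a a [a] := by
  refine ⟨by simp, rfl, rfl⟩

lemma part_pair {a b : ℝ} (h : a ≤ b) : Part a b [a, b] := by
  refine ⟨by simp [h], rfl, rfl⟩

lemma mkPart {a b : ℝ} {l : List ℝ} (hs : l.Pairwise (· ≤ ·)) (ha : a ∈ l) (hb : b ∈ l)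
    (h1 : ∀ x ∈ l, a ≤ x) (h2 : ∀ x ∈ l, x ≤ b) : Part a b l := by
  refine ⟨hs, ?_, ?_⟩
  · cases l with
    | nil => simp at ha
    | cons c l' =>
      have h3 : a ≤ c := h1 c (by simp)
      have h4 : c ≤ a := by
        rcases List.mem_cons.1 ha with rfl | h
        · exact le_refl _
        · exact (List.pairwise_cons.1 hs).1 a h
      simp [le_antisymm h4 h3]
  · have hne : l ≠ [] := by rintro rfl; simp at ha
    rw [List.getLast?_eq_getLast_of_ne_nil hne]
    have hm := List.getLast_mem hne
    have h3 : l.getLast hne ≤ b := h2 _ hm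
    have h4 : b ≤ l.getLast hne :=
      sorted_le_getLast hs hb (List.getLast?_eq_getLast_of_ne_nil hne)
    simp [le_antisymm h3 h4]

def join (l₁ l₂ : List ℝ) : List ℝ := l₁ ++ l₂.tail

lemma Part.head_eq {a b c : ℝ} {l : List ℝ} (h : Part a b (c :: l)) : c = a := by
  simpa using h.2.1

lemma Part.tail {a b x y : ℝ} {r : List ℝ} (h : Part a b (x :: y :: r)) :
    Part y b (y :: r) :=
  ⟨(List.pairwise_cons.1 h.1).2, rfl, by simpa [List.getLast?_cons_cons] using h.2.2⟩

lemma part_join {a m b : ℝ} {l₁ l₂ : List ℝ} (h₁ : Part a m l₁) (h₂ : Part m b l₂) :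
    Part a b (join l₁ l₂) := by
  obtain ⟨t, rfl⟩ : ∃ t, l₂ = m :: t := by
    cases l₂ with
    | nil => exact absurd rfl h₂.ne_nil
    | cons c t => exact ⟨t, by rw [h₂.head_eq]⟩
  show Part a b (l₁ ++ t)
  have hts : t.Pairwise (· ≤ ·) := (List.pairwise_cons.1 h₂.1).2
  have hmt : ∀ y ∈ t, m ≤ y := (List.pairwise_cons.1 h₂.1).1
  refine mkPart ?_ ?_ ?_ ?_ ?_
  · rw [List.pairwise_append]
    refine ⟨h₁.1, hts, fun x hx y hy => ?_⟩
    exact le_trans (h₁.bounds hx).2 (hmt y hy)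
  · exact List.mem_append_left _ h₁.head_mem
  · rcases List.mem_cons.1 h₂.last_mem with rfl | h
    · exact List.mem_append_left _ h₁.last_mem
    · exact List.mem_append_right _ h
  · intro x hx
    rcases List.mem_append.1 hx with hx | hx
    · exact (h₁.bounds hx).1
    · exact le_trans h₁.le (hmt x hx)
  · intro x hx
    rcases List.mem_append.1 hx with hx | hx
    · exact le_trans (h₁.bounds hx).2 h₂.le
    · exact (h₂.bounds (by simp [hx])).2

lemma S1_join : ∀ {l₁ : List ℝ} {a m b : ℝ} {l₂ : List ℝ}, Part a m l₁ → Part m b l₂ →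
    ∀ g, S1 g (join l₁ l₂) = S1 g l₁ + S1 g l₂
  | [], a, m, b, l₂, h₁, h₂, g => absurd rfl h₁.ne_nil
  | [x], a, m, b, l₂, h₁, h₂, g => by
      have hx : x = a := h₁.head_eq
      have hm : x = m := by simpa using h₁.2.2
      obtain ⟨t, rfl⟩ : ∃ t, l₂ = m :: t := by
        cases l₂ with
        | nil => exact absurd rfl h₂.ne_nil
        | cons c t => exact ⟨t, by rw [h₂.head_eq]⟩
      show S1 g ([x] ++ t) = S1 g [x] + S1 g (m :: t)
      rw [S1_single, hm]; simp
  | x :: y :: r, a, m, b, l₂, h₁, h₂, g => by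
      have : join (x :: y :: r) l₂ = x :: y :: (r ++ l₂.tail) := by simp [join]
      rw [this, S1_cons₂, S1_cons₂]
      have hr : (y :: (r ++ l₂.tail)) = join (y :: r) l₂ := by simp [join]
      rw [hr, S1_join h₁.tail h₂ g]
      ring

lemma chainSub {g : ℝ → ℝ → ℝ} (hg : Adm g) :
    ∀ {l : List ℝ} {c d : ℝ}, Part c d l → g c d ≤ S1 g l
  | [], c, d, h => absurd rfl h.ne_nil
  | [x], c, d, h => by
      have hc : x = c := h.head_eq
      have hd : x = d := by simpa using h.2.2
      rw [← hc, ← hd, S1_single, hg.2.1]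
  | x :: y :: r, c, d, h => by
      have hc : x = c := h.head_eq
      subst hc
      rw [S1_cons₂]
      have h1 : g x d ≤ g x y + g y d := hg.2.2 x y d
      have h2 : g y d ≤ S1 g (y :: r) := chainSub hg h.tail
      linarith

lemma splitAtMem {a b m : ℝ} {l : List ℝ} (h : Part a b l) (hm : m ∈ l) :
    ∃ l₁ l₂, Part a m l₁ ∧ Part m b l₂ ∧ (∀ x ∈ l, m ≤ x → x ∈ l₂) ∧
      ∀ g, S1 g l = S1 g l₁ + S1 g l₂ := by
  obtain ⟨w₁, w₂, rfl⟩ := List.append_of_mem hm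
  have hsort := h.1
  have hcross : ∀ x ∈ w₁, x ≤ m := by
    intro x hx
    rw [List.pairwise_append] at hsort
    exact hsort.2.2 x hx m (by simp)
  have hsort2 : (m :: w₂).Pairwise (· ≤ ·) := by
    rw [List.pairwise_append] at hsort
    exact hsort.2.1
  have hmw : ∀ y ∈ w₂, m ≤ y := (List.pairwise_cons.1 hsort2).1
  have h₁ : Part a m (w₁ ++ [m]) := by
    refine mkPart ?_ ?_ (by simp) ?_ ?_
    · rw [List.pairwise_append]
      rw [List.pairwise_append] at hsort
      exact ⟨hsort.1, by simp, fun x hx y hy => by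
        simp at hy; subst hy; exact hcross x hx⟩
    · rcases List.mem_append.1 h.head_mem with hx | hx
      · exact List.mem_append_left _ hx
      · rcases List.mem_cons.1 hx with rfl | hx
        · simp
        · have h1 : m ≤ a := hmw a hx
          have h2 : a ≤ m := (h.bounds (by simp)).1
          have : a = m := le_antisymm h2 h1
          simp [this]
    · intro x hx
      rcases List.mem_append.1 hx with hx | hx
      · exact (h.bounds (List.mem_append_left _ hx)).1
      · simp at hx; subst hx; exact (h.bounds hm).1
    · intro x hx
      rcases List.mem_append.1 hx with hx | hx
      · exact hcross x hx
      · simp at hx; subst hx; exact le_refl _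
  have h₂ : Part m b (m :: w₂) := by
    refine mkPart hsort2 (by simp) ?_ ?_ ?_
    · rcases List.mem_append.1 h.last_mem with hx | hx
      · have h1 : b ≤ m := hcross b hx
        have h2 : m ≤ b := (h.bounds hm).2
        have : b = m := le_antisymm h1 h2
        simp [this]
      · exact hx
    · intro x hx
      rcases List.mem_cons.1 hx with rfl | hx
      · exact le_refl _
      · exact hmw x hx
    · intro x hx
      exact (h.bounds (by simp [List.mem_cons.1 hx])).2
  refine ⟨w₁ ++ [m], m :: w₂, h₁, h₂, ?_, ?_⟩
  · intro x hx hmx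
    rcases List.mem_append.1 hx with hx | hx
    · have : x = m := le_antisymm (hcross x hx) hmx
      simp [this]
    · exact hx
  · intro g
    have : w₁ ++ m :: w₂ = join (w₁ ++ [m]) (m :: w₂) := by simp [join]
    rw [this, S1_join h₁ h₂ g]

lemma refSub {g : ℝ → ℝ → ℝ} (hg : Adm g) :
    ∀ {t : List ℝ} {c d : ℝ} {w : List ℝ}, Part c d t → Part c d w →
      (∀ x ∈ t, x ∈ w) → S1 g t ≤ S1 g w
  | [], c, d, w, ht, hw, hsub => absurd rfl ht.ne_nil
  | [x], c, d, w, ht, hw, hsub => by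
      rw [S1_single]; exact S1_nonneg hg.1 w
  | x :: y :: r, c, d, w, ht, hw, hsub => by
      have hc : x = c := ht.head_eq
      subst hc
      have hy : y ∈ w := hsub y (by simp)
      obtain ⟨w₁, w₂, hw₁, hw₂, hup, heq⟩ := splitAtMem hw hy
      rw [S1_cons₂, heq g]
      have h1 : g x y ≤ S1 g w₁ := chainSub hg (by
        have : x = x := rfl
        exact hw₁)
      have ht' : Part y d (y :: r) := ht.tail
      have h2 : S1 g (y :: r) ≤ S1 g w₂ := by
        refine refSub hg ht' hw₂ ?_
        intro p hp
        exact hup p (hsub p (by simp [List.mem_cons.1 hp])) (ht'.bounds hp).1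
      linarith

lemma part_sort {a b : ℝ} {l₁ l₂ : List ℝ} (h : Part a b l₁)
    (hb : ∀ x ∈ l₂, a ≤ x ∧ x ≤ b) :
    Part a b (List.insertionSort (· ≤ ·) (l₁ ++ l₂)) := by
  have hmem : ∀ x, x ∈ List.insertionSort (· ≤ ·) (l₁ ++ l₂) ↔ x ∈ l₁ ++ l₂ := fun x =>
    List.Perm.mem_iff (List.perm_insertionSort _ _)
  refine mkPart (List.pairwise_insertionSort _ _) ?_ ?_ ?_ ?_
  · exact (hmem a).2 (List.mem_append_left _ h.head_mem)
  · exact (hmem b).2 (List.mem_append_left _ h.last_mem)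
  · intro x hx
    rcases List.mem_append.1 ((hmem x).1 hx) with hx | hx
    · exact (h.bounds hx).1
    · exact (hb x hx).1
  · intro x hx
    rcases List.mem_append.1 ((hmem x).1 hx) with hx | hx
    · exact (h.bounds hx).2
    · exact (hb x hx).2

lemma splitPart {a b m : ℝ} {l : List ℝ} (h : Part a b l) (h1 : a ≤ m) (h2 : m ≤ b) :
    ∃ l₁ l₂, Part a m l₁ ∧ Part m b l₂ ∧
      ∀ g, Adm g → S1 g l ≤ S1 g l₁ + S1 g l₂ := by
  set w := List.insertionSort (· ≤ ·) (l ++ [m]) with hw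
  have hpw : Part a b w := part_sort h (by simpa using ⟨h1, h2⟩)
  have hmw : m ∈ w := by
    rw [List.mem_insertionSort]; simp
  obtain ⟨l₁, l₂, hl₁, hl₂, hup, heq⟩ := splitAtMem hpw hmw
  refine ⟨l₁, l₂, hl₁, hl₂, fun g hg => ?_⟩
  have : S1 g l ≤ S1 g w := by
    refine refSub hg h hpw ?_
    intro x hx; rw [List.mem_insertionSort]; exact List.mem_append_left _ hx
  rw [heq g] at this; exact this

lemma mergeParts {c d : ℝ} {t v : List ℝ} (ht : Part c d t) (hv : Part c d v) :
    ∃ w, Part c d w ∧ ∀ g, Adm g → S1 g t ≤ S1 g w ∧ S1 g v ≤ S1 g w := by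
  set w := List.insertionSort (· ≤ ·) (t ++ v) with hw
  have hpw : Part c d w := part_sort ht (fun x hx => hv.bounds hx)
  refine ⟨w, hpw, fun g hg => ⟨?_, ?_⟩⟩
  · exact refSub hg ht hpw (fun x hx => by
      rw [List.mem_insertionSort]; exact List.mem_append_left _ hx)
  · exact refSub hg hv hpw (fun x hx => by
      rw [List.mem_insertionSort]; exact List.mem_append_right _ hx)

-- chunk 3
def S2 (h : ℝ → ℝ → ℝ → ℝ → ℝ) (s t : List ℝ) : ℝ :=
  S1 (fun a b => S1 (fun c d => h a b c d) t) s

def Adm2 (h : ℝ → ℝ → ℝ → ℝ → ℝ) : Prop :=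
  (∀ a b, Adm (fun c d => h a b c d)) ∧ (∀ c d, Adm (fun a b => h a b c d))

def flip2 (h : ℝ → ℝ → ℝ → ℝ → ℝ) : ℝ → ℝ → ℝ → ℝ → ℝ := fun c d a b => h a b c d

lemma adm2_flip {h : ℝ → ℝ → ℝ → ℝ → ℝ} (h2 : Adm2 h) : Adm2 (flip2 h) :=
  ⟨h2.2, h2.1⟩

lemma S2_swap (h : ℝ → ℝ → ℝ → ℝ → ℝ) (s t : List ℝ) : S2 h s t = S2 (flip2 h) t s := by
  unfold S2 S1 flip2
  induction (pairs s) with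
  | nil => simp
  | cons p l ih =>
    simp only [List.map_cons, List.sum_cons, ih, List.sum_map_add]

lemma adm_inner {h : ℝ → ℝ → ℝ → ℝ → ℝ} (h2 : Adm2 h) (t : List ℝ) :
    Adm (fun a b => S1 (fun c d => h a b c d) t) := by
  refine ⟨fun a b => S1_nonneg (h2.1 a b).1 t, ?_, ?_⟩
  · intro x
    exact S1_zero (fun c d => (h2.2 c d).2.1 x) t
  · intro x y z
    rw [← S1_add_fun]
    exact S1_mono_fun (fun c d => (h2.2 c d).2.2 x y z) t

lemma S2_nonneg {h : ℝ → ℝ → ℝ → ℝ → ℝ} (h2 : Adm2 h) (s t : List ℝ) : 0 ≤ S2 h s t :=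
  S1_nonneg (adm_inner h2 t).1 s

lemma S2_mono_fun {h₁ h₂ : ℝ → ℝ → ℝ → ℝ → ℝ} (hle : ∀ a b c d, h₁ a b c d ≤ h₂ a b c d)
    (s t : List ℝ) : S2 h₁ s t ≤ S2 h₂ s t :=
  S1_mono_fun (fun a b => S1_mono_fun (fun c d => hle a b c d) t) s

lemma S2_join_left {h : ℝ → ℝ → ℝ → ℝ → ℝ} {a m b : ℝ} {s₁ s₂ : List ℝ}
    (h₁ : Part a m s₁) (h₂ : Part m b s₂) (t : List ℝ) :
    S2 h (join s₁ s₂) t = S2 h s₁ t + S2 h s₂ t :=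
  S1_join h₁ h₂ _

lemma S2_join_right {h : ℝ → ℝ → ℝ → ℝ → ℝ} {a m b : ℝ} {t₁ t₂ : List ℝ}
    (h₁ : Part a m t₁) (h₂ : Part m b t₂) (s : List ℝ) :
    S2 h s (join t₁ t₂) = S2 h s t₁ + S2 h s t₂ := by
  rw [S2_swap h s (join t₁ t₂), S2_swap h s t₁, S2_swap h s t₂]
  exact S1_join h₁ h₂ _

lemma chainSub2 {h : ℝ → ℝ → ℝ → ℝ → ℝ} (h2 : Adm2 h) {a b c d : ℝ} {s t : List ℝ}
    (hs : Part a b s) (ht : Part c d t) : h a b c d ≤ S2 h s t := by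
  have step1 : h a b c d ≤ S1 (fun c' d' => h a b c' d') t := chainSub (h2.1 a b) ht
  have step2 : S1 (fun c' d' => h a b c' d') t ≤
      S1 (fun c' d' => S1 (fun x y => h x y c' d') s) t :=
    S1_mono_fun (fun c' d' => chainSub (h2.2 c' d') hs) t
  have : S1 (fun c' d' => S1 (fun x y => h x y c' d') s) t = S2 h s t := by
    rw [S2_swap]; rfl
  linarith

lemma S2_ref_left {h : ℝ → ℝ → ℝ → ℝ → ℝ} (h2 : Adm2 h) {a b : ℝ} {s w : List ℝ}
    (hs : Part a b s) (hw : Part a b w) (hsub : ∀ x ∈ s, x ∈ w) (t : List ℝ) :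
    S2 h s t ≤ S2 h w t :=
  refSub (adm_inner h2 t) hs hw hsub

lemma S2_ref_right {h : ℝ → ℝ → ℝ → ℝ → ℝ} (h2 : Adm2 h) {c d : ℝ} {t w : List ℝ}
    (ht : Part c d t) (hw : Part c d w) (hsub : ∀ x ∈ t, x ∈ w) (s : List ℝ) :
    S2 h s t ≤ S2 h s w := by
  rw [S2_swap h s t, S2_swap h s w]
  exact refSub (adm_inner (adm2_flip h2) s) ht hw hsub

lemma S1_eq_range (g : ℝ → ℝ → ℝ) :
    ∀ l : List ℝ, S1 g l = ∑ i ∈ Finset.range (l.length - 1), g (l.getD i 0) (l.getD (i+1) 0)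
  | [] => by simp [S1_nil]
  | [a] => by simp [S1_single]
  | a :: b :: r => by
    rw [S1_cons₂, S1_eq_range g (b :: r)]
    have hlen : (a :: b :: r).length - 1 = ((b :: r).length - 1) + 1 := by simp
    rw [hlen, Finset.sum_range_succ']
    simp [List.getD_cons_succ, List.getD_cons_zero]
    ring


lemma getD_mono {w : List ℝ} (hs : w.Pairwise (· ≤ ·)) {i j : ℕ} (hij : i ≤ j)
    (hj : j < w.length) : w.getD i 0 ≤ w.getD j 0 := by
  have hi : i < w.length := lt_of_le_of_lt hij hj
  rw [List.getD_eq_getElem w 0 hi, List.getD_eq_getElem w 0 hj]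
  rcases eq_or_lt_of_le hij with rfl | hlt
  · exact le_refl _
  · have := List.pairwise_iff_get.1 hs ⟨i, hi⟩ ⟨j, hj⟩ hlt
    simpa using this

lemma S2_abs_le {F : ℝ × ℝ → ℝ} {T M : ℝ}
    (hM : ∀ (n : ℕ) (t : Fin (n + 1) → ℝ), Monotone t → t 0 = 0 → t (Fin.last n) = T →
      ∑ i : Fin n, ∑ j : Fin n,
        |planarInc F (t i.castSucc) (t i.succ) (t j.castSucc) (t j.succ)| ≤ M)
    {w : List ℝ} (hw : Part 0 T w) :
    S2 (fun a b c d => |planarInc F a b c d|) w w ≤ M := by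
  have hne : w ≠ [] := hw.ne_nil
  have hpos : 0 < w.length := List.length_pos_iff.2 hne
  set n := w.length - 1 with hn
  have hlen : n + 1 = w.length := Nat.succ_pred_eq_of_pos hpos
  set tf : Fin (n + 1) → ℝ := fun i => w.getD i.val 0 with htf
  have hmono : Monotone tf := by
    intro i j hij
    exact getD_mono hw.1 hij (by rw [← hlen]; exact j.isLt)
  have ht0 : tf 0 = 0 := by
    obtain ⟨c, r, rfl⟩ : ∃ c r, w = c :: r := by
      cases w with
      | nil => exact absurd rfl hne
      | cons c r => exact ⟨c, r, rfl⟩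
    have : c = 0 := by simpa using hw.2.1
    simp [htf, this]
  have htl : tf (Fin.last n) = T := by
    have hnl : n < w.length := by omega
    have h1 : tf (Fin.last n) = w.getD n 0 := rfl
    rw [h1, List.getD_eq_getElem w 0 hnl]
    have h2 : w.getLast hne = w[n] := by
      rw [List.getLast_eq_getElem]
    have h3 : w.getLast hne = T := by
      have := hw.2.2
      rw [List.getLast?_eq_getLast_of_ne_nil hne] at this
      simpa using this
    rw [← h2, h3]
  have key := hM n tf hmono ht0 htl
  have heq : S2 (fun a b c d => |planarInc F a b c d|) w w =
      ∑ i : Fin n, ∑ j : Fin n,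
        |planarInc F (tf i.castSucc) (tf i.succ) (tf j.castSucc) (tf j.succ)| := by
    have e1 : ∀ (i : Fin n), tf i.castSucc = w.getD i.val 0 := fun i => by
      simp [htf, Fin.coe_castSucc]
    have e2 : ∀ (i : Fin n), tf i.succ = w.getD (i.val + 1) 0 := fun i => by
      simp [htf, Fin.val_succ]
    calc S2 (fun a b c d => |planarInc F a b c d|) w w
        = ∑ i ∈ Finset.range n, ∑ j ∈ Finset.range n,
            |planarInc F (w.getD i 0) (w.getD (i+1) 0) (w.getD j 0) (w.getD (j+1) 0)| := by
          rw [S2, S1_eq_range]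
          refine Finset.sum_congr rfl (fun i _ => ?_)
          rw [S1_eq_range]
      _ = ∑ i : Fin n, ∑ j : Fin n,
            |planarInc F (tf i.castSucc) (tf i.succ) (tf j.castSucc) (tf j.succ)| := by
          symm
          simp only [e1, e2]
          rw [Fin.sum_univ_eq_sum_range (fun i => ∑ j : Fin n,
            |planarInc F (w.getD i 0) (w.getD (i+1) 0) (w.getD (j:ℕ) 0) (w.getD ((j:ℕ)+1) 0)|) n]
          refine Finset.sum_congr rfl (fun i _ => ?_)
          rw [Fin.sum_univ_eq_sum_range (fun j =>
            |planarInc F (w.getD i 0) (w.getD (i+1) 0) (w.getD j 0) (w.getD (j+1) 0)|) n]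
  rw [heq]
  exact key

-- chunk 4
lemma S2_split_right {h : ℝ → ℝ → ℝ → ℝ → ℝ} (h2 : Adm2 h) {c d m : ℝ} {t : List ℝ}
    (ht : Part c d t) (h1 : c ≤ m) (hm : m ≤ d) :
    ∃ t₁ t₂, Part c m t₁ ∧ Part m d t₂ ∧ ∀ s, S2 h s t ≤ S2 h s t₁ + S2 h s t₂ := by
  obtain ⟨t₁, t₂, ht₁, ht₂, hg⟩ := splitPart ht h1 hm
  refine ⟨t₁, t₂, ht₁, ht₂, fun s => ?_⟩
  rw [S2_swap h s t, S2_swap h s t₁, S2_swap h s t₂]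
  exact hg _ (adm_inner (adm2_flip h2) s)

lemma S2_split_left {h : ℝ → ℝ → ℝ → ℝ → ℝ} (h2 : Adm2 h) {c d m : ℝ} {s : List ℝ}
    (hs : Part c d s) (h1 : c ≤ m) (hm : m ≤ d) :
    ∃ s₁ s₂, Part c m s₁ ∧ Part m d s₂ ∧ ∀ t, S2 h s t ≤ S2 h s₁ t + S2 h s₂ t := by
  obtain ⟨s₁, s₂, hs₁, hs₂, hg⟩ := splitPart hs h1 hm
  exact ⟨s₁, s₂, hs₁, hs₂, fun t => hg _ (adm_inner h2 t)⟩

lemma S2_merge_right {h : ℝ → ℝ → ℝ → ℝ → ℝ} (h2 : Adm2 h) {c d : ℝ} {t v : List ℝ}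
    (ht : Part c d t) (hv : Part c d v) :
    ∃ w, Part c d w ∧ (∀ s, S2 h s t ≤ S2 h s w) ∧ (∀ s, S2 h s v ≤ S2 h s w) := by
  obtain ⟨w, hw, hg⟩ := mergeParts ht hv
  refine ⟨w, hw, fun s => ?_, fun s => ?_⟩
  · rw [S2_swap h s t, S2_swap h s w]
    exact (hg _ (adm_inner (adm2_flip h2) s)).1
  · rw [S2_swap h s v, S2_swap h s w]
    exact (hg _ (adm_inner (adm2_flip h2) s)).2

section FF
variable (F : ℝ × ℝ → ℝ)

def hp : ℝ → ℝ → ℝ → ℝ → ℝ := fun a b c d => max (planarInc F a b c d) 0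

lemma max_add_le' (x y : ℝ) : max (x + y) 0 ≤ max x 0 + max y 0 :=
  max_le (add_le_add (le_max_left x 0) (le_max_left y 0))
    (by positivity)

lemma adm2_hp : Adm2 (hp F) := by
  constructor
  · intro a b
    refine ⟨fun x y => le_max_right _ _, fun x => ?_, fun x y z => ?_⟩
    · have : planarInc F a b x x = 0 := by simp [planarInc]
      simp [hp, this]
    · have : planarInc F a b x z = planarInc F a b x y + planarInc F a b y z := by
        simp [planarInc]; ring
      simpa [hp, this] using max_add_le' (planarInc F a b x y) (planarInc F a b y z)
  · intro c d
    refine ⟨fun x y => le_max_right _ _, fun x => ?_, fun x y z => ?_⟩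
    · have : planarInc F x x c d = 0 := by simp [planarInc]
      simp [hp, this]
    · have : planarInc F x z c d = planarInc F x y c d + planarInc F y z c d := by
        simp [planarInc]; ring
      simpa [hp, this] using max_add_le' (planarInc F x y c d) (planarInc F y z c d)

lemma hp_le_abs : ∀ a b c d, hp F a b c d ≤ |planarInc F a b c d| := fun a b c d =>
  max_le (le_abs_self _) (abs_nonneg _)

variable {T M : ℝ}

lemma S2_hp_bound
    (hM : ∀ (n : ℕ) (t : Fin (n + 1) → ℝ), Monotone t → t 0 = 0 → t (Fin.last n) = T →
      ∑ i : Fin n, ∑ j : Fin n,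
        |planarInc F (t i.castSucc) (t i.succ) (t j.castSucc) (t j.succ)| ≤ M)
    {x y : ℝ} {s t : List ℝ} (hxT : x ≤ T) (hyT : y ≤ T)
    (hs : Part 0 x s) (ht : Part 0 y t) : S2 (hp F) s t ≤ M := by
  have h2 := adm2_hp F
  set s' := join s [x, T] with hs'def
  have hs' : Part 0 T s' := part_join hs (part_pair hxT)
  set t' := join t [y, T] with ht'def
  have ht' : Part 0 T t' := part_join ht (part_pair hyT)
  have step1 : S2 (hp F) s t ≤ S2 (hp F) s' t := by
    rw [hs'def, S2_join_left hs (part_pair hxT) t]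
    have := S2_nonneg h2 [x, T] t
    linarith
  have step2 : S2 (hp F) s' t ≤ S2 (hp F) s' t' := by
    rw [ht'def, S2_join_right ht (part_pair hyT) s']
    have := S2_nonneg h2 s' [y, T]
    linarith
  obtain ⟨w, hw, hg⟩ := mergeParts hs' ht'
  have step3 : S2 (hp F) s' t' ≤ S2 (hp F) w t' :=
    (hg _ (adm_inner h2 t')).1
  have step4 : S2 (hp F) w t' ≤ S2 (hp F) w w := by
    rw [S2_swap (hp F) w t', S2_swap (hp F) w w]
    exact (hg _ (adm_inner (adm2_flip h2) w)).2
  have step5 : S2 (hp F) w w ≤ S2 (fun a b c d => |planarInc F a b c d|) w w :=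
    S2_mono_fun (hp_le_abs F) w w
  have step6 := S2_abs_le hM hw
  linarith

def PSet (x y : ℝ) : Set ℝ :=
  {v | ∃ s t, Part 0 x s ∧ Part 0 y t ∧ v = S2 (hp F) s t}

def P0 (x y : ℝ) : ℝ := sSup (PSet F x y)

lemma PSet_nonempty {x y : ℝ} (hx : 0 ≤ x) (hy : 0 ≤ y) : (PSet F x y).Nonempty :=
  ⟨_, [0, x], [0, y], part_pair hx, part_pair hy, rfl⟩

lemma PSet_bdd
    (hM : ∀ (n : ℕ) (t : Fin (n + 1) → ℝ), Monotone t → t 0 = 0 → t (Fin.last n) = T →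
      ∑ i : Fin n, ∑ j : Fin n,
        |planarInc F (t i.castSucc) (t i.succ) (t j.castSucc) (t j.succ)| ≤ M)
    {x y : ℝ} (hxT : x ≤ T) (hyT : y ≤ T) : BddAbove (PSet F x y) := by
  refine ⟨M, ?_⟩
  rintro v ⟨s, t, hs, ht, rfl⟩
  exact S2_hp_bound F hM hxT hyT hs ht

lemma pairs_degenerate {t : List ℝ} (h : Part 0 0 t) :
    ∀ q ∈ pairs t, q.1 = 0 ∧ q.2 = 0 := by
  intro q hq
  obtain ⟨h1, h2⟩ := List.of_mem_zip hq
  have h2' : q.2 ∈ t := List.mem_of_mem_tail h2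
  exact ⟨le_antisymm (h.bounds h1).2 (h.bounds h1).1,
    le_antisymm (h.bounds h2').2 (h.bounds h2').1⟩

lemma S2_deg_right {t : List ℝ} (h : Part 0 0 t) (s : List ℝ) : S2 (hp F) s t = 0 := by
  unfold S2
  refine S1_zero (fun a b => ?_) s
  refine List.sum_eq_zero ?_
  simp only [List.mem_map]
  rintro _ ⟨q, hq, rfl⟩
  obtain ⟨h1, h2⟩ := pairs_degenerate h q hq
  rw [h1, h2]
  have : planarInc F a b 0 0 = 0 := by simp [planarInc]
  simp [hp, this]

lemma S2_deg_left {s : List ℝ} (h : Part 0 0 s) (t : List ℝ) : S2 (hp F) s t = 0 := by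
  unfold S2 S1
  refine List.sum_eq_zero ?_
  simp only [List.mem_map]
  rintro _ ⟨q, hq, rfl⟩
  obtain ⟨h1, h2⟩ := pairs_degenerate h q hq
  rw [h1, h2]
  refine List.sum_eq_zero ?_
  simp only [List.mem_map]
  rintro _ ⟨q', hq', rfl⟩
  have : planarInc F 0 0 q'.1 q'.2 = 0 := by simp [planarInc]
  simp [hp, this]

lemma P0_zero_right {x : ℝ} (hx : 0 ≤ x) : P0 F x 0 = 0 := by
  have : PSet F x 0 = {0} := by
    rw [Set.eq_singleton_iff_nonempty_unique_mem]
    refine ⟨PSet_nonempty F hx (le_refl 0), ?_⟩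
    rintro v ⟨s, t, hs, ht, rfl⟩
    exact S2_deg_right F ht s
  rw [P0, this, csSup_singleton]

lemma P0_zero_left {y : ℝ} (hy : 0 ≤ y) : P0 F 0 y = 0 := by
  have : PSet F 0 y = {0} := by
    rw [Set.eq_singleton_iff_nonempty_unique_mem]
    refine ⟨PSet_nonempty F (le_refl 0) hy, ?_⟩
    rintro v ⟨s, t, hs, ht, rfl⟩
    exact S2_deg_left F hs t
  rw [P0, this, csSup_singleton]

lemma P0_inc
    (hM : ∀ (n : ℕ) (t : Fin (n + 1) → ℝ), Monotone t → t 0 = 0 → t (Fin.last n) = T →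
      ∑ i : Fin n, ∑ j : Fin n,
        |planarInc F (t i.castSucc) (t i.succ) (t j.castSucc) (t j.succ)| ≤ M)
    {a₁ b₁ a₂ b₂ : ℝ} (h01 : 0 ≤ a₁) (h1 : a₁ ≤ b₁) (hb1 : b₁ ≤ T)
    (h02 : 0 ≤ a₂) (h2 : a₂ ≤ b₂) (hb2 : b₂ ≤ T) :
    P0 F a₁ b₂ + P0 F b₁ a₂ + hp F a₁ b₁ a₂ b₂ ≤ P0 F b₁ b₂ + P0 F a₁ a₂ := by
  have hq := adm2_hp F
  have hbddBB := PSet_bdd F hM hb1 hb2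
  have hbddAA := PSet_bdd F hM (le_trans h1 hb1) (le_trans h2 hb2)
  have key : ∀ v₁ ∈ PSet F a₁ b₂, ∀ v₂ ∈ PSet F b₁ a₂,
      v₁ + v₂ + hp F a₁ b₁ a₂ b₂ ≤ P0 F b₁ b₂ + P0 F a₁ a₂ := by
    rintro v₁ ⟨s, t, hs, ht, rfl⟩ v₂ ⟨u, v, hu, hv, rfl⟩
    obtain ⟨t₁, t₂, ht₁, ht₂, hts⟩ := S2_split_right hq ht h02 h2
    obtain ⟨u₁, u₂, hu₁, hu₂, hus⟩ := S2_split_left hq hu h01 h1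
    obtain ⟨w, hw, hw₁, hw₂⟩ := S2_merge_right hq ht₁ hv
    have e1 : S2 (hp F) s t ≤ S2 (hp F) s w + S2 (hp F) s t₂ := by
      have := hts s
      have := hw₁ s
      linarith
    have e2 : S2 (hp F) u v ≤ S2 (hp F) u₁ w + S2 (hp F) u₂ w := by
      have := hus v
      have := hw₂ u₁
      have := hw₂ u₂
      linarith
    have e3 : hp F a₁ b₁ a₂ b₂ ≤ S2 (hp F) u₂ t₂ := chainSub2 hq hu₂ ht₂
    have eH1 : S2 (hp F) (join s u₂) (join w t₂) =
        S2 (hp F) s w + S2 (hp F) s t₂ + S2 (hp F) u₂ w + S2 (hp F) u₂ t₂ := by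
      rw [S2_join_left hs hu₂, S2_join_right hw ht₂ s, S2_join_right hw ht₂ u₂]
      ring
    have m1 : S2 (hp F) (join s u₂) (join w t₂) ≤ P0 F b₁ b₂ :=
      le_csSup hbddBB ⟨join s u₂, join w t₂, part_join hs hu₂, part_join hw ht₂, rfl⟩
    have m2 : S2 (hp F) u₁ w ≤ P0 F a₁ a₂ :=
      le_csSup hbddAA ⟨u₁, w, hu₁, hw, rfl⟩
    linarith
  have hne1 : (PSet F a₁ b₂).Nonempty := PSet_nonempty F h01 (le_trans h02 h2)
  have hne2 : (PSet F b₁ a₂).Nonempty := PSet_nonempty F (le_trans h01 h1) h02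
  have step1 : P0 F a₁ b₂ ≤ P0 F b₁ b₂ + P0 F a₁ a₂ - P0 F b₁ a₂ - hp F a₁ b₁ a₂ b₂ := by
    refine csSup_le hne1 ?_
    intro v₁ hv₁
    have step2 : P0 F b₁ a₂ ≤ P0 F b₁ b₂ + P0 F a₁ a₂ - v₁ - hp F a₁ b₁ a₂ b₂ := by
      refine csSup_le hne2 ?_
      intro v₂ hv₂
      have := key v₁ hv₁ v₂ hv₂
      linarith
    linarith
  linarith


end FF
end PVx

theorem stmt_0 (T : ℝ) (hT : 0 < T) (F : ℝ × ℝ → ℝ)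
    (hax : VanishesOnAxes F) (hbv : BoundedPlanarVariation F T) :
    ∃ Fp Fm : ℝ × ℝ → ℝ,
      (∀ p : ℝ × ℝ, p.1 ∈ Icc 0 T → p.2 ∈ Icc 0 T → F p = Fp p - Fm p) ∧
      PlanarlyIncreasingOn Fp T ∧ PlanarlyIncreasingOn Fm T ∧
      VanishesOnAxes Fp ∧ VanishesOnAxes Fm := by
  obtain ⟨M, hM⟩ := hbv
  refine ⟨fun p => PVx.P0 F p.1 p.2, fun p => PVx.P0 F p.1 p.2 - F p, ?_, ?_, ?_, ?_, ?_⟩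
  · intro p _ _; ring
  · intro a₁ b₁ a₂ b₂ h01 h1 hb1 h02 h2 hb2
    have key := PVx.P0_inc F hM h01 h1 hb1 h02 h2 hb2
    have hnn : 0 ≤ PVx.hp F a₁ b₁ a₂ b₂ := le_max_right _ _
    have hpe : planarInc (fun p => PVx.P0 F p.1 p.2) a₁ b₁ a₂ b₂ =
        PVx.P0 F b₁ b₂ + PVx.P0 F a₁ a₂ - PVx.P0 F a₁ b₂ - PVx.P0 F b₁ a₂ := rfl
    rw [hpe]; linarith
  · intro a₁ b₁ a₂ b₂ h01 h1 hb1 h02 h2 hb2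
    have key := PVx.P0_inc F hM h01 h1 hb1 h02 h2 hb2
    have hge : planarInc F a₁ b₁ a₂ b₂ ≤ PVx.hp F a₁ b₁ a₂ b₂ := le_max_left _ _
    have hpe : planarInc (fun p => PVx.P0 F p.1 p.2 - F p) a₁ b₁ a₂ b₂ =
        (PVx.P0 F b₁ b₂ + PVx.P0 F a₁ a₂ - PVx.P0 F a₁ b₂ - PVx.P0 F b₁ a₂)
          - planarInc F a₁ b₁ a₂ b₂ := by
      simp only [planarInc]; ring
    rw [hpe]; linarith
  · intro a ha
    exact ⟨PVx.P0_zero_right F ha, PVx.P0_zero_left F ha⟩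
  · intro a ha
    obtain ⟨h1, h2⟩ := hax a ha
    constructor
    · show PVx.P0 F a 0 - F (a, 0) = 0
      rw [PVx.P0_zero_right F ha, h1]; ring
    · show PVx.P0 F 0 a - F (0, a) = 0
      rw [PVx.P0_zero_left F ha, h2]; ring
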